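/- Let f : ℝⁿ → ℝ have block coordinate-wise Lipschitz gradient with constants Lᵢ, and let ψ : ℝⁿ → ℝ be differentiable and concave along coordinates, i.e. ψ(x + Uᵢd) ≤ ψ(x) + ⟨Uᵢᵀ∇ψ(x), d⟩ for all d, x, i. Fix i, a point x, a constant H > Lᵢ/2, and set d = −(1/H)·Uᵢᵀ∇F(x) where F = f + ψ. Then F(x + Uᵢd) ≤ F(x) − (H − Lᵢ/2)‖d‖². -/

import Mathlib

open scoped RealInnerProductSpace

set_option maxHeartbeats 1000000 in
private lemma descent_aux {n ni : ℕ} (f : EuclideanSpace ℝ (Fin n) → ℝ)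
    (hf : ContDiff ℝ 1 f)
    (U : EuclideanSpace ℝ (Fin ni) →L[ℝ] EuclideanSpace ℝ (Fin n))
    (L : ℝ)
    (hLip : ∀ (x : EuclideanSpace ℝ (Fin n)) (h : EuclideanSpace ℝ (Fin ni)),
      ‖ContinuousLinearMap.adjoint U (gradient f (x + U h) - gradient f x)‖ ≤ L * ‖h‖)
    (x : EuclideanSpace ℝ (Fin n)) (d : EuclideanSpace ℝ (Fin ni)) :
    f (x + U d) ≤ f x + ⟪ContinuousLinearMap.adjoint U (gradient f x), d⟫ + L / 2 * ‖d‖ ^ 2 := by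
  set v := U d with hv
  have hfd := hf.differentiable one_ne_zero
  have hkey : ∀ y : EuclideanSpace ℝ (Fin n), ∀ w, fderiv ℝ f y w = ⟪gradient f y, w⟫ := by
    intro y w
    rw [((hfd y).hasGradientAt.hasFDerivAt).fderiv]
    rfl
  have hder : ∀ t : ℝ, HasDerivAt (fun t : ℝ => f (x + t • v))
      (fderiv ℝ f (x + t • v) v) t := by
    intro t
    have hc : HasDerivAt (fun t : ℝ => x + t • v) v t := by
      simpa using ((hasDerivAt_id t).smul_const v).const_add x
    exact (hfd (x + t • v)).hasFDerivAt.comp_hasDerivAt t hc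
  have hcont : Continuous fun t : ℝ => fderiv ℝ f (x + t • v) v := by
    have h1 : Continuous fun t : ℝ => x + t • v := by continuity
    exact ((hf.continuous_fderiv one_ne_zero).comp h1).clm_apply continuous_const
  have hftc : ∫ t in (0:ℝ)..1, fderiv ℝ f (x + t • v) v = f (x + v) - f x := by
    have := intervalIntegral.integral_eq_sub_of_hasDerivAt (f := fun t : ℝ => f (x + t • v))
      (f' := fun t : ℝ => fderiv ℝ f (x + t • v) v) (a := 0) (b := 1)
      (fun t _ => hder t) (hcont.intervalIntegrable 0 1)
    simpa using this
  have hbound : ∀ t ∈ Set.Icc (0:ℝ) 1, fderiv ℝ f (x + t • v) v ≤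
      ⟪ContinuousLinearMap.adjoint U (gradient f x), d⟫ + L * ‖d‖ ^ 2 * t := by
    intro t ht
    have h1 : fderiv ℝ f (x + t • v) v = ⟪ContinuousLinearMap.adjoint U (gradient f (x + t • v)), d⟫ := by
      rw [hkey, hv, ContinuousLinearMap.adjoint_inner_left]
    have h2 : ⟪ContinuousLinearMap.adjoint U (gradient f (x + t • v)), d⟫ =
        ⟪ContinuousLinearMap.adjoint U (gradient f x), d⟫ +
        ⟪ContinuousLinearMap.adjoint U (gradient f (x + t • v) - gradient f x), d⟫ := by
      rw [map_sub, inner_sub_left]; ring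
    have h3 : x + t • v = x + U (t • d) := by rw [map_smul]
    have h4 : ⟪ContinuousLinearMap.adjoint U (gradient f (x + t • v) - gradient f x), d⟫ ≤
        L * ‖d‖ ^ 2 * t := by
      calc _ ≤ ‖ContinuousLinearMap.adjoint U (gradient f (x + t • v) - gradient f x)‖ * ‖d‖ :=
            real_inner_le_norm _ _
        _ ≤ (L * ‖t • d‖) * ‖d‖ := by
            apply mul_le_mul_of_nonneg_right _ (norm_nonneg d)
            rw [h3]; exact hLip x (t • d)
        _ = L * ‖d‖ ^ 2 * t := by
            rw [norm_smul, Real.norm_eq_abs, abs_of_nonneg ht.1]; ring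
    rw [h1, h2]; linarith
  have hint : ∫ t in (0:ℝ)..1, (⟪ContinuousLinearMap.adjoint U (gradient f x), d⟫ +
      L * ‖d‖ ^ 2 * t) = ⟪ContinuousLinearMap.adjoint U (gradient f x), d⟫ + L / 2 * ‖d‖ ^ 2 := by
    rw [intervalIntegral.integral_add (intervalIntegrable_const)
      ((intervalIntegral.intervalIntegrable_id.const_mul _ : _))]
    have h5 : ∫ t in (0:ℝ)..1, L * ‖d‖ ^ 2 * t = L * ‖d‖ ^ 2 * ∫ t in (0:ℝ)..1, t :=
      intervalIntegral.integral_const_mul _ _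
    rw [h5, integral_id]
    simp
    ring
  have hmono := intervalIntegral.integral_mono_on (μ := MeasureTheory.volume) (by norm_num : (0:ℝ) ≤ 1)
    (hcont.intervalIntegrable 0 1)
    ((continuous_const.add (continuous_const.mul continuous_id) : Continuous fun t : ℝ =>
      ⟪ContinuousLinearMap.adjoint U (gradient f x), d⟫ + L * ‖d‖ ^ 2 * t).intervalIntegrable 0 1)
    hbound
  rw [hftc] at hmono; simp only [Pi.add_apply] at hmono; rw [hint] at hmono
  linarith


set_option maxHeartbeats 1000000 in
/-- Descent of the coordinate gradient step with constant stepsize when `ψ` is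
concave along coordinates: with `d = -(1/H) Uᵀ∇F(x)` and `H > L/2`,
`F(x + U d) ≤ F(x) - (H - L/2)‖d‖²` where `F = f + ψ`. -/
theorem stmt4 {n ni : ℕ} (f ψ : EuclideanSpace ℝ (Fin n) → ℝ)
    (hf : ContDiff ℝ 1 f) (hψ : Differentiable ℝ ψ)
    (U : EuclideanSpace ℝ (Fin ni) →L[ℝ] EuclideanSpace ℝ (Fin n))
    (L H : ℝ) (hL : 0 < L)
    (hLip : ∀ (x : EuclideanSpace ℝ (Fin n)) (h : EuclideanSpace ℝ (Fin ni)),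
      ‖ContinuousLinearMap.adjoint U (gradient f (x + U h) - gradient f x)‖ ≤ L * ‖h‖)
    (hconc : ∀ (x : EuclideanSpace ℝ (Fin n)) (d : EuclideanSpace ℝ (Fin ni)),
      ψ (x + U d) ≤ ψ x + ⟪ContinuousLinearMap.adjoint U (gradient ψ x), d⟫)
    (hH : L / 2 < H)
    (x : EuclideanSpace ℝ (Fin n)) (d : EuclideanSpace ℝ (Fin ni))
    (hd : d = -(H⁻¹ • ContinuousLinearMap.adjoint U (gradient f x + gradient ψ x))) :
    f (x + U d) + ψ (x + U d) ≤ (f x + ψ x) - (H - L / 2) * ‖d‖ ^ 2 := by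
  have hH0 : 0 < H := lt_trans (by linarith) hH
  have h1 := descent_aux f hf U L hLip x d
  have h2 := hconc x d
  have hs : ContinuousLinearMap.adjoint U (gradient f x + gradient ψ x) = -(H • d) := by
    rw [hd]
    rw [smul_neg, neg_neg, smul_smul, mul_inv_cancel₀ hH0.ne', one_smul]
  have hsum : ⟪ContinuousLinearMap.adjoint U (gradient f x), d⟫ +
      ⟪ContinuousLinearMap.adjoint U (gradient ψ x), d⟫ = -(H * ‖d‖ ^ 2) := by
    rw [← inner_add_left, ← map_add, hs, inner_neg_left, real_inner_smul_left,
      real_inner_self_eq_norm_sq]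
  linarith
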